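/- Let n ∈ ℝ and let q = (n,a,b,c) ∈ ℝ⁴ satisfy (n+a+b+c)² = 2(n²+a²+b²+c²), n+a ≥ 0, n+b ≥ 0. For a Descartes quadruple q' = (n,a',b',c') of this form, write Q_{q'} for the binary quadratic form [n+a', n+a'+b'−c', n+b']. Then the sets {Q_{Mq} : M ∈ Ap₁} and {Q_q ∘ γ : γ ∈ GL(2,ℤ)} are equal, where Q ∘ γ denotes the form Q(αx+βy, γ'x+δy) for γ = [[α,β],[γ',δ]]. In particular, every M ∈ Ap₁ maps q to a quadruple of the same shape (first entry n, satisfying the Descartes equation with the corresponding positivity), and the Ap₁-orbit of q corresponds exactly to the GL(2,ℤ)-equivalence class of the form Q_q. -/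

import Mathlib

open Matrix

/-- The Apollonian move `S₄` (as a real matrix, acting on real quadruples). -/
def S₄ : Matrix (Fin 4) (Fin 4) ℝ := !![1,0,0,0; 0,1,0,0; 0,0,1,0; 2,2,2,-1]

/-- The permutation matrix swapping coordinates 2 and 3. -/
def P₂₃ : Matrix (Fin 4) (Fin 4) ℝ := !![1,0,0,0; 0,0,1,0; 0,1,0,0; 0,0,0,1]

/-- The permutation matrix swapping coordinates 2 and 4. -/
def P₂₄ : Matrix (Fin 4) (Fin 4) ℝ := !![1,0,0,0; 0,0,0,1; 0,0,1,0; 0,1,0,0]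

/-- The group `Ap₁` generated by `P₂₃`, `P₂₄`, `S₄`; since the generators are
involutions, it consists exactly of all finite products of the generators. -/
def Ap₁ : Submonoid (Matrix (Fin 4) (Fin 4) ℝ) := Submonoid.closure {P₂₃, P₂₄, S₄}

/-- The binary quadratic form `[n+a, n+a+b−c, n+b]` attached to the Descartes
quadruple `q = (n,a,b,c)`, as a function on `ℝ × ℝ`. -/
def Qform (q : Fin 4 → ℝ) : ℝ × ℝ → ℝ := fun p =>
  (q 0 + q 1) * p.1 ^ 2 + (q 0 + q 1 + q 2 - q 3) * p.1 * p.2 + (q 0 + q 2) * p.2 ^ 2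

/-! ### Auxiliary material: the three substitution matrices over `ℤ` -/

private def σ1 : Matrix (Fin 2) (Fin 2) ℤ := !![0,1;1,0]
private def σ2 : Matrix (Fin 2) (Fin 2) ℤ := !![1,0;0,-1]
private def σ3 : Matrix (Fin 2) (Fin 2) ℤ := !![-1,0;1,1]

private def Cgrp : Submonoid (Matrix (Fin 2) (Fin 2) ℤ) := Submonoid.closure {σ1, σ2, σ3}

private lemma σ1_mem : σ1 ∈ Cgrp := Submonoid.subset_closure (by simp)
private lemma σ2_mem : σ2 ∈ Cgrp := Submonoid.subset_closure (by simp)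
private lemma σ3_mem : σ3 ∈ Cgrp := Submonoid.subset_closure (by simp)

private lemma N_mem : !![(-1:ℤ),0;0,-1] ∈ Cgrp := by
  have h : !![(-1:ℤ),0;0,-1] = σ1*σ2*(σ1*σ2) := by
    ext i j; fin_cases i <;> fin_cases j <;>
      simp [σ1, σ2, Matrix.mul_apply, Fin.sum_univ_two]
  rw [h]; exact mul_mem (mul_mem σ1_mem σ2_mem) (mul_mem σ1_mem σ2_mem)

private lemma T_mem : !![(1:ℤ),1;0,1] ∈ Cgrp := by
  have h : !![(1:ℤ),1;0,1] = σ1 * (σ2 * (σ3 * !![(-1:ℤ),0;0,-1] * σ2) * σ2) * σ1 := by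
    ext i j; fin_cases i <;> fin_cases j <;>
      simp [σ1, σ2, σ3, Matrix.mul_apply, Fin.sum_univ_two]
  rw [h]
  exact mul_mem (mul_mem σ1_mem (mul_mem (mul_mem σ2_mem
    (mul_mem (mul_mem σ3_mem N_mem) σ2_mem)) σ2_mem)) σ1_mem

private lemma T'_mem : !![(1:ℤ),-1;0,1] ∈ Cgrp := by
  have h : !![(1:ℤ),-1;0,1] = σ1 * (σ3 * !![(-1:ℤ),0;0,-1] * σ2) * σ1 := by
    ext i j; fin_cases i <;> fin_cases j <;>
      simp [σ1, σ2, σ3, Matrix.mul_apply, Fin.sum_univ_two]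
  rw [h]
  exact mul_mem (mul_mem σ1_mem (mul_mem (mul_mem σ3_mem N_mem) σ2_mem)) σ1_mem

private lemma Tpow_nat (m : ℕ) : !![(1:ℤ),(m:ℤ);0,1] ∈ Cgrp ∧ !![(1:ℤ),-(m:ℤ);0,1] ∈ Cgrp := by
  induction m with
  | zero =>
    have h1 : !![(1:ℤ),((0:ℕ):ℤ);0,1] = 1 := by
      ext i j; fin_cases i <;> fin_cases j <;> simp [Matrix.one_apply]
    have h2 : !![(1:ℤ),-((0:ℕ):ℤ);0,1] = 1 := by
      ext i j; fin_cases i <;> fin_cases j <;> simp [Matrix.one_apply]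
    exact ⟨by rw [h1]; exact one_mem Cgrp, by rw [h2]; exact one_mem Cgrp⟩
  | succ m ih =>
    constructor
    · have h : !![(1:ℤ),((m+1:ℕ):ℤ);0,1] = !![(1:ℤ),(m:ℤ);0,1] * !![(1:ℤ),1;0,1] := by
        ext i j; fin_cases i <;> fin_cases j <;>
          simp [Matrix.mul_apply, Fin.sum_univ_two] <;> push_cast <;> ring
      rw [h]; exact mul_mem ih.1 T_mem
    · have h : !![(1:ℤ),-((m+1:ℕ):ℤ);0,1] = !![(1:ℤ),-(m:ℤ);0,1] * !![(1:ℤ),-1;0,1] := by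
        ext i j; fin_cases i <;> fin_cases j <;>
          simp [Matrix.mul_apply, Fin.sum_univ_two] <;> push_cast <;> ring
      rw [h]; exact mul_mem ih.2 T'_mem

private lemma Tpow_mem (t : ℤ) : !![(1:ℤ),t;0,1] ∈ Cgrp := by
  obtain ⟨m, rfl | rfl⟩ := t.eq_nat_or_neg
  · exact (Tpow_nat m).1
  · exact (Tpow_nat m).2

private lemma tri_mem (a b d : ℤ) (ha : a = 1 ∨ a = -1) (hd : d = 1 ∨ d = -1) :
    !![a,b;0,d] ∈ Cgrp := by
  rcases ha with rfl | rfl <;> rcases hd with rfl | rfl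
  · exact Tpow_mem b
  · have h : !![(1:ℤ),b;0,-1] = !![(1:ℤ),-b;0,1] * σ2 := by
      ext i j; fin_cases i <;> fin_cases j <;>
        simp [σ2, Matrix.mul_apply, Fin.sum_univ_two]
    rw [h]; exact mul_mem (Tpow_mem _) σ2_mem
  · have h : !![(-1:ℤ),b;0,1] = !![(-1:ℤ),0;0,-1] * (σ2 * !![(1:ℤ),-b;0,1]) := by
      ext i j; fin_cases i <;> fin_cases j <;>
        simp [σ2, Matrix.mul_apply, Fin.sum_univ_two]
    rw [h]; exact mul_mem N_mem (mul_mem σ2_mem (Tpow_mem _))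
  · have h : !![(-1:ℤ),b;0,-1] = !![(-1:ℤ),0;0,-1] * !![(1:ℤ),-b;0,1] := by
      ext i j; fin_cases i <;> fin_cases j <;>
        simp [Matrix.mul_apply, Fin.sum_univ_two]
    rw [h]; exact mul_mem N_mem (Tpow_mem _)

private lemma base_case (γ : Matrix (Fin 2) (Fin 2) ℤ) (hc0 : γ 1 0 = 0)
    (hdet : γ.det = 1 ∨ γ.det = -1) : γ ∈ Cgrp := by
  have hγ : γ = !![γ 0 0, γ 0 1; 0, γ 1 1] := by
    have h := Matrix.eta_fin_two γ
    rw [hc0] at h; exact h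
  have hdet' : γ 0 0 * γ 1 1 = 1 ∨ γ 0 0 * γ 1 1 = -1 := by
    rw [Matrix.det_fin_two, hc0] at hdet
    simpa using hdet
  have hu : IsUnit (γ 0 0) ∧ IsUnit (γ 1 1) := by
    rcases hdet' with h | h
    · exact ⟨IsUnit.of_mul_eq_one _ h,
        IsUnit.of_mul_eq_one _ (show γ 1 1 * γ 0 0 = 1 by rw [mul_comm]; exact h)⟩
    · have h' : γ 0 0 * (-(γ 1 1)) = 1 := by linarith
      have h'' : γ 1 1 * (-(γ 0 0)) = 1 := by rw [mul_neg, mul_comm]; omega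
      exact ⟨IsUnit.of_mul_eq_one _ h', IsUnit.of_mul_eq_one _ h''⟩
  rw [hγ]
  exact tri_mem _ _ _ (Int.isUnit_iff.mp hu.1) (Int.isUnit_iff.mp hu.2)

/-- Every integer `2 × 2` matrix of determinant `±1` is a product of
`σ1`, `σ2`, `σ3`. -/
private lemma gen_mem (γ : Matrix (Fin 2) (Fin 2) ℤ) (hdet : γ.det = 1 ∨ γ.det = -1) :
    γ ∈ Cgrp := by
  suffices H : ∀ (NB : ℕ) (γ : Matrix (Fin 2) (Fin 2) ℤ), (γ 1 0).natAbs ≤ NB →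
      (γ.det = 1 ∨ γ.det = -1) → γ ∈ Cgrp from H (γ 1 0).natAbs γ le_rfl hdet
  intro NB
  induction NB with
  | zero =>
    intro γ hc hdet
    exact base_case γ (by omega) hdet
  | succ NB ih =>
    intro γ hc hdet
    by_cases hc0 : γ 1 0 = 0
    · exact base_case γ hc0 hdet
    · set k : ℤ := γ 0 0 / γ 1 0 with hk
      set Y : Matrix (Fin 2) (Fin 2) ℤ := !![0,1;1,-k] with hY
      set X : Matrix (Fin 2) (Fin 2) ℤ := !![k,1;1,0] with hX
      have hXY : X * Y = 1 := by
        ext i j; fin_cases i <;> fin_cases j <;>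
          simp [hX, hY, Matrix.mul_apply, Fin.sum_univ_two, Matrix.one_apply]
      have hγeq : γ = X * (Y * γ) := by
        rw [← mul_assoc, hXY, one_mul]
      have hent : (Y * γ) 1 0 = γ 0 0 % γ 1 0 := by
        simp [hY, Matrix.mul_apply, Fin.sum_univ_two, Int.emod_def, hk]
        ring
      have hr0 : 0 ≤ (Y * γ) 1 0 := by
        rw [hent]; exact Int.emod_nonneg _ hc0
      have hrlt : (Y * γ) 1 0 < |γ 1 0| := by
        rw [hent]; exact Int.emod_lt_abs _ hc0
      have hdet' : (Y * γ).det = 1 ∨ (Y * γ).det = -1 := by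
        have hYdet : Y.det = -1 := by simp [hY, Matrix.det_fin_two_of]
        rw [Matrix.det_mul, hYdet]
        rcases hdet with h | h <;> rw [h] <;> simp
      have hmem' : Y * γ ∈ Cgrp := by
        apply ih
        · rw [Int.abs_eq_natAbs] at hrlt
          omega
        · exact hdet'
      have hXmem : X ∈ Cgrp := by
        have h : X = !![(1:ℤ),k;0,1] * σ1 := by
          ext i j; fin_cases i <;> fin_cases j <;>
            simp [hX, σ1, Matrix.mul_apply, Fin.sum_univ_two]
        rw [h]; exact mul_mem (Tpow_mem _) σ1_mem
      rw [hγeq]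
      exact mul_mem hXmem hmem'

/-! ### The substitution action on forms -/

private def act (γ : Matrix (Fin 2) (Fin 2) ℤ) (F : ℝ × ℝ → ℝ) : ℝ × ℝ → ℝ := fun p =>
  F ((γ 0 0 : ℝ) * p.1 + (γ 0 1 : ℝ) * p.2, (γ 1 0 : ℝ) * p.1 + (γ 1 1 : ℝ) * p.2)

private lemma act_one (F : ℝ × ℝ → ℝ) : act 1 F = F := by
  funext p; simp [act, Matrix.one_apply]

private lemma act_mul (γ δ : Matrix (Fin 2) (Fin 2) ℤ) (F : ℝ × ℝ → ℝ) :
    act (γ * δ) F = act δ (act γ F) := by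
  funext p
  simp only [act, Matrix.mul_apply, Fin.sum_univ_two]
  have h1 : (((γ 0 0 * δ 0 0 + γ 0 1 * δ 1 0 : ℤ) : ℝ)) * p.1
        + ((γ 0 0 * δ 0 1 + γ 0 1 * δ 1 1 : ℤ) : ℝ) * p.2
      = (γ 0 0 : ℝ) * ((δ 0 0 : ℝ) * p.1 + (δ 0 1 : ℝ) * p.2)
        + (γ 0 1 : ℝ) * ((δ 1 0 : ℝ) * p.1 + (δ 1 1 : ℝ) * p.2) := by
    push_cast; ring
  have h2 : (((γ 1 0 * δ 0 0 + γ 1 1 * δ 1 0 : ℤ) : ℝ)) * p.1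
        + ((γ 1 0 * δ 0 1 + γ 1 1 * δ 1 1 : ℤ) : ℝ) * p.2
      = (γ 1 0 : ℝ) * ((δ 0 0 : ℝ) * p.1 + (δ 0 1 : ℝ) * p.2)
        + (γ 1 1 : ℝ) * ((δ 1 0 : ℝ) * p.1 + (δ 1 1 : ℝ) * p.2) := by
    push_cast; ring
  rw [h1, h2]

private lemma mulVec_entries (M : Matrix (Fin 4) (Fin 4) ℝ) (v : Fin 4 → ℝ) (i : Fin 4) :
    (M.mulVec v) i = M i 0 * v 0 + M i 1 * v 1 + M i 2 * v 2 + M i 3 * v 3 := by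
  simp [Matrix.mulVec, dotProduct, Fin.sum_univ_four]

private lemma gen1 (v : Fin 4 → ℝ) : Qform (P₂₃.mulVec v) = act σ1 (Qform v) := by
  funext p
  simp [Qform, act, P₂₃, σ1, Matrix.mulVec, dotProduct, Fin.sum_univ_four]
  ring

private lemma gen2 (v : Fin 4 → ℝ) : Qform (S₄.mulVec v) = act σ2 (Qform v) := by
  funext p
  simp [Qform, act, S₄, σ2, Matrix.mulVec, dotProduct, Fin.sum_univ_four]
  ring

private lemma gen3 (v : Fin 4 → ℝ) : Qform (P₂₄.mulVec v) = act σ3 (Qform v) := by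
  funext p
  simp [Qform, act, P₂₄, σ3, Matrix.mulVec, dotProduct, Fin.sum_univ_four]
  ring

/-! ### Shape preservation -/

private def Shape (n : ℝ) (v : Fin 4 → ℝ) : Prop :=
  v 0 = n ∧ (v 0 + v 1 + v 2 + v 3) ^ 2 = 2 * ((v 0)^2 + (v 1)^2 + (v 2)^2 + (v 3)^2)
    ∧ 0 ≤ v 0 + v 1 ∧ 0 ≤ v 0 + v 2

private lemma shape1 (n : ℝ) (v : Fin 4 → ℝ) (h : Shape n v) : Shape n (P₂₃.mulVec v) := by
  obtain ⟨h0, hd, ha, hb⟩ := h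
  have e := mulVec_entries P₂₃ v
  refine ⟨?_, ?_, ?_, ?_⟩ <;> simp only [e] <;>
    simp [P₂₃, Matrix.vecHead, Matrix.vecTail] <;>
    [exact h0; nlinarith [hd]; linarith; linarith]

private lemma shape2 (n : ℝ) (v : Fin 4 → ℝ) (h : Shape n v) : Shape n (S₄.mulVec v) := by
  obtain ⟨h0, hd, ha, hb⟩ := h
  have e := mulVec_entries S₄ v
  refine ⟨?_, ?_, ?_, ?_⟩ <;> simp only [e] <;>
    simp [S₄, Matrix.vecHead, Matrix.vecTail] <;>
    [exact h0; nlinarith [hd]; linarith; linarith]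

private lemma shape3 (n : ℝ) (v : Fin 4 → ℝ) (h : Shape n v) : Shape n (P₂₄.mulVec v) := by
  obtain ⟨h0, hd, ha, hb⟩ := h
  have e := mulVec_entries P₂₄ v
  have hdisc : (v 0 + v 1 + v 2 - v 3)^2 - 4*(v 0 + v 1)*(v 0 + v 2) = -4*(v 0)^2 := by
    nlinarith [hd]
  have key : 0 ≤ v 0 + v 3 := by
    nlinarith [sq_nonneg (v 0 + v 1 - (v 0 + v 2)), sq_nonneg (v 0 + v 1 + (v 0 + v 2)),
      sq_nonneg (v 0), mul_nonneg ha hb]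
  refine ⟨?_, ?_, ?_, ?_⟩ <;> simp only [e] <;>
    simp [P₂₄, Matrix.vecHead, Matrix.vecTail] <;>
    [exact h0; nlinarith [hd]; linarith; linarith]

private lemma shape_all (n : ℝ) (M : Matrix (Fin 4) (Fin 4) ℝ) (hM : M ∈ Ap₁) :
    ∀ v, Shape n v → Shape n (M.mulVec v) := by
  induction hM using Submonoid.closure_induction with
  | mem x hx =>
    simp only [Set.mem_insert_iff, Set.mem_singleton_iff] at hx
    rcases hx with rfl | rfl | rfl
    · exact shape1 n
    · exact shape3 n
    · exact shape2 n
  | one => intro v hv; simpa [Matrix.one_mulVec] using hv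
  | mul x y hx hy ihx ihy =>
    intro v hv
    rw [← Matrix.mulVec_mulVec]
    exact ihx _ (ihy v hv)

private lemma forms_forward (M : Matrix (Fin 4) (Fin 4) ℝ) (hM : M ∈ Ap₁) :
    ∃ γ : Matrix (Fin 2) (Fin 2) ℤ, (γ.det = 1 ∨ γ.det = -1) ∧
      ∀ v, Qform (M.mulVec v) = act γ (Qform v) := by
  induction hM using Submonoid.closure_induction with
  | mem x hx =>
    simp only [Set.mem_insert_iff, Set.mem_singleton_iff] at hx
    rcases hx with rfl | rfl | rfl
    · exact ⟨σ1, Or.inr (by simp [σ1, Matrix.det_fin_two_of]), gen1⟩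
    · exact ⟨σ3, Or.inr (by simp [σ3, Matrix.det_fin_two_of]), gen3⟩
    · exact ⟨σ2, Or.inr (by simp [σ2, Matrix.det_fin_two_of]), gen2⟩
  | one =>
    refine ⟨1, Or.inl Matrix.det_one, fun v => ?_⟩
    rw [Matrix.one_mulVec, act_one]
  | mul x y hx hy ihx ihy =>
    obtain ⟨γx, hγx, hfx⟩ := ihx
    obtain ⟨γy, hγy, hfy⟩ := ihy
    refine ⟨γy * γx, ?_, fun v => ?_⟩
    · rw [Matrix.det_mul]
      rcases hγy with h | h <;> rcases hγx with h' | h' <;> rw [h, h'] <;> simp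
    · rw [← Matrix.mulVec_mulVec, hfx, hfy, act_mul]

private lemma forms_backward (γ : Matrix (Fin 2) (Fin 2) ℤ) (hγ : γ ∈ Cgrp) :
    ∃ M ∈ Ap₁, ∀ v, Qform (M.mulVec v) = act γ (Qform v) := by
  induction hγ using Submonoid.closure_induction with
  | mem x hx =>
    simp only [Set.mem_insert_iff, Set.mem_singleton_iff] at hx
    rcases hx with rfl | rfl | rfl
    · exact ⟨P₂₃, Submonoid.subset_closure (by simp), gen1⟩
    · exact ⟨S₄, Submonoid.subset_closure (by simp), gen2⟩
    · exact ⟨P₂₄, Submonoid.subset_closure (by simp), gen3⟩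
  | one =>
    refine ⟨1, one_mem Ap₁, fun v => ?_⟩
    rw [Matrix.one_mulVec, act_one]
  | mul x y hx hy ihx ihy =>
    obtain ⟨Mx, hMx, hfx⟩ := ihx
    obtain ⟨My, hMy, hfy⟩ := ihy
    refine ⟨My * Mx, mul_mem hMy hMx, fun v => ?_⟩
    rw [← Matrix.mulVec_mulVec, hfy, hfx, act_mul]

/-- Every `M ∈ Ap₁` maps `q` to a quadruple of the same shape, and the
`Ap₁`-orbit of `q` corresponds exactly to the `GL(2,ℤ)`-equivalence class of
the form `Q_q` (acting by linear substitution of variables). -/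
theorem ap1_orbit_is_gl2z_class (n : ℝ) (q : Fin 4 → ℝ)
    (h0 : q 0 = n)
    (hdesc : (q 0 + q 1 + q 2 + q 3) ^ 2
      = 2 * ((q 0) ^ 2 + (q 1) ^ 2 + (q 2) ^ 2 + (q 3) ^ 2))
    (h1 : 0 ≤ q 0 + q 1) (h2 : 0 ≤ q 0 + q 2) :
    (∀ M ∈ Ap₁, (M.mulVec q) 0 = n ∧
      ((M.mulVec q) 0 + (M.mulVec q) 1 + (M.mulVec q) 2 + (M.mulVec q) 3) ^ 2
        = 2 * (((M.mulVec q) 0) ^ 2 + ((M.mulVec q) 1) ^ 2 + ((M.mulVec q) 2) ^ 2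
            + ((M.mulVec q) 3) ^ 2) ∧
      0 ≤ (M.mulVec q) 0 + (M.mulVec q) 1 ∧ 0 ≤ (M.mulVec q) 0 + (M.mulVec q) 2) ∧
    {f : ℝ × ℝ → ℝ | ∃ M ∈ Ap₁, f = Qform (M.mulVec q)} =
      {f : ℝ × ℝ → ℝ | ∃ γ : Matrix (Fin 2) (Fin 2) ℤ, (γ.det = 1 ∨ γ.det = -1) ∧
        f = fun p => Qform q
          ((γ 0 0 : ℝ) * p.1 + (γ 0 1 : ℝ) * p.2, (γ 1 0 : ℝ) * p.1 + (γ 1 1 : ℝ) * p.2)} := by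
  constructor
  · intro M hM
    exact shape_all n M hM q ⟨h0, hdesc, h1, h2⟩
  · ext f
    simp only [Set.mem_setOf_eq]
    constructor
    · rintro ⟨M, hM, rfl⟩
      obtain ⟨γ, hγdet, hγ⟩ := forms_forward M hM
      exact ⟨γ, hγdet, hγ q⟩
    · rintro ⟨γ, hγdet, rfl⟩
      obtain ⟨M, hM, hform⟩ := forms_backward γ (gen_mem γ hγdet)
      exact ⟨M, hM, (hform q).symm⟩
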